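/- Two unbiased qubit effects A = (1/2)(1 + a·σ) and B = (1/2)(1 + b·σ) with ‖a‖, ‖b‖ ≤ 1 are coexistent if and only if ‖a + b‖ + ‖a − b‖ ≤ 2. -/

import Mathlib

open scoped ComplexOrder RealInnerProductSpace

/-- The vector of Pauli matrices contracted with a real 3-vector: `v · σ`. -/
noncomputable def pauli (v : EuclideanSpace ℝ (Fin 3)) : Matrix (Fin 2) (Fin 2) ℂ :=
  (v 0 : ℂ) • !![0, 1; 1, 0] + (v 1 : ℂ) • !![0, -Complex.I; Complex.I, 0] +
    (v 2 : ℂ) • !![1, 0; 0, -1]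

/-- The qubit effect `(1/2)(α·1 + v·σ)`. -/
noncomputable def qubitEffect (α : ℝ) (v : EuclideanSpace ℝ (Fin 3)) :
    Matrix (Fin 2) (Fin 2) ℂ :=
  (1 / 2 : ℂ) • ((α : ℂ) • (1 : Matrix (Fin 2) (Fin 2) ℂ) + pauli v)

/-- Effects `A` and `B` are coexistent: there is a four-outcome POVM `(G₁,G₂,G₃,G₄)`
with `A = G₁ + G₂` and `B = G₁ + G₃`. -/
def Coexistent (A B : Matrix (Fin 2) (Fin 2) ℂ) : Prop :=
  ∃ G₁ G₂ G₃ G₄ : Matrix (Fin 2) (Fin 2) ℂ,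
    G₁.PosSemidef ∧ G₂.PosSemidef ∧ G₃.PosSemidef ∧ G₄.PosSemidef ∧
    G₁ + G₂ + G₃ + G₄ = 1 ∧ A = G₁ + G₂ ∧ B = G₁ + G₃

open Matrix

lemma qubitEffect_eq (α : ℝ) (v : EuclideanSpace ℝ (Fin 3)) :
    qubitEffect α v = (1/2 : ℂ) •
      !![(α : ℂ) + v 2, (v 0 : ℂ) - v 1 * Complex.I;
         (v 0 : ℂ) + v 1 * Complex.I, (α : ℂ) - v 2] := by
  unfold qubitEffect pauli
  ext i j
  fin_cases i <;> fin_cases j <;> simp [Matrix.one_apply] <;> ring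

lemma qubitEffect_add (α β : ℝ) (v w : EuclideanSpace ℝ (Fin 3)) :
    qubitEffect α v + qubitEffect β w = qubitEffect (α + β) (v + w) := by
  simp only [qubitEffect_eq]
  ext i j
  fin_cases i <;> fin_cases j <;> simp [PiLp.add_apply] <;> ring

lemma qubitEffect_sub (α β : ℝ) (v w : EuclideanSpace ℝ (Fin 3)) :
    qubitEffect α v - qubitEffect β w = qubitEffect (α - β) (v - w) := by
  simp only [qubitEffect_eq]
  ext i j
  fin_cases i <;> fin_cases j <;> simp [PiLp.sub_apply] <;> ring

lemma qubitEffect_two_zero : qubitEffect 2 0 = 1 := by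
  rw [qubitEffect_eq]
  ext i j
  fin_cases i <;> fin_cases j <;> simp [Matrix.one_apply, PiLp.zero_apply]

lemma norm_sq_eq3 (v : EuclideanSpace ℝ (Fin 3)) : ‖v‖^2 = v 0^2 + v 1^2 + v 2^2 := by
  rw [EuclideanSpace.norm_eq, Real.sq_sqrt (by positivity)]
  simp [Fin.sum_univ_three, Real.norm_eq_abs, sq_abs]

lemma key_ineq (γ v0 v1 v2 a b c d : ℝ) (h : v0^2+v1^2+v2^2 ≤ γ^2) (hγ : 0 ≤ γ) :
    0 ≤ γ*(a^2+b^2+c^2+d^2) + v2*(a^2+b^2-c^2-d^2) + v0*(2*(a*c+b*d)) + v1*(2*(a*d-b*c)) := by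
  set p := a^2+b^2+c^2+d^2 with hp
  set u0 := 2*(a*c+b*d)
  set u1 := 2*(a*d-b*c)
  set u2 := a^2+b^2-c^2-d^2
  have hu : u0^2 + u1^2 + u2^2 = p^2 := by simp only [hp]; ring
  have hpn : 0 ≤ p := by positivity
  have CS : (v0*u0+v1*u1+v2*u2)^2 ≤ (v0^2+v1^2+v2^2)*(u0^2+u1^2+u2^2) := by
    nlinarith [sq_nonneg (v0*u1-v1*u0), sq_nonneg (v0*u2-v2*u0), sq_nonneg (v1*u2-v2*u1)]
  nlinarith [CS, mul_nonneg hγ hpn, sq_nonneg (γ*p + (v0*u0+v1*u1+v2*u2)),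
    mul_le_mul_of_nonneg_right h (sq_nonneg p)]

lemma posSemidef_qubitEffect_iff (γ : ℝ) (v : EuclideanSpace ℝ (Fin 3)) :
    (qubitEffect γ v).PosSemidef ↔ ‖v‖ ≤ γ := by
  constructor
  · intro hP
    have hq := hP.dotProduct_mulVec_nonneg
    set n := ‖v‖ with hn
    have hn0 : 0 ≤ n := norm_nonneg v
    have hn2 : n^2 = v 0^2 + v 1^2 + v 2^2 := norm_sq_eq3 v
    have h00 : (0:ℂ) ≤ star (![1,0] : Fin 2 → ℂ) ⬝ᵥ (qubitEffect γ v *ᵥ ![1,0]) := hq _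
    have h11 : (0:ℂ) ≤ star (![0,1] : Fin 2 → ℂ) ⬝ᵥ (qubitEffect γ v *ᵥ ![0,1]) := hq _
    have hww : (0:ℂ) ≤ star (![(v 0 : ℂ) - v 1 * Complex.I, -((v 2:ℂ) + n)] : Fin 2 → ℂ) ⬝ᵥ
        (qubitEffect γ v *ᵥ ![(v 0 : ℂ) - v 1 * Complex.I, -((v 2:ℂ) + n)]) := hq _
    rw [qubitEffect_eq] at h00 h11 hww
    have e00 : star (![1,0] : Fin 2 → ℂ) ⬝ᵥ (((1/2 : ℂ) •
      !![(γ : ℂ) + v 2, (v 0 : ℂ) - v 1 * Complex.I;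
         (v 0 : ℂ) + v 1 * Complex.I, (γ : ℂ) - v 2]) *ᵥ ![1,0]) = (((γ + v 2)/2 : ℝ) : ℂ) := by
      simp [dotProduct, Matrix.mulVec, Fin.sum_univ_two]
      ring
    have e11 : star (![0,1] : Fin 2 → ℂ) ⬝ᵥ (((1/2 : ℂ) •
      !![(γ : ℂ) + v 2, (v 0 : ℂ) - v 1 * Complex.I;
         (v 0 : ℂ) + v 1 * Complex.I, (γ : ℂ) - v 2]) *ᵥ ![0,1]) = (((γ - v 2)/2 : ℝ) : ℂ) := by
      simp [dotProduct, Matrix.mulVec, Fin.sum_univ_two]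
      ring
    have eww : star (![(v 0 : ℂ) - v 1 * Complex.I, -((v 2:ℂ) + n)] : Fin 2 → ℂ) ⬝ᵥ (((1/2 : ℂ) •
      !![(γ : ℂ) + v 2, (v 0 : ℂ) - v 1 * Complex.I;
         (v 0 : ℂ) + v 1 * Complex.I, (γ : ℂ) - v 2]) *ᵥ
           ![(v 0 : ℂ) - v 1 * Complex.I, -((v 2:ℂ) + n)]) = ((n * (n + v 2) * (γ - n) : ℝ) : ℂ) := by
      simp [dotProduct, Matrix.mulVec, Fin.sum_univ_two, Complex.ext_iff]
      constructor
      · linear_combination ((2*n + v 2 - γ)/2) * hn2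
      · ring
    rw [e00, Complex.zero_le_real] at h00
    rw [e11, Complex.zero_le_real] at h11
    rw [eww, Complex.zero_le_real] at hww
    rcases eq_or_lt_of_le hn0 with h | h
    · linarith
    rcases le_or_gt (n + v 2) 0 with h2 | h2
    · linarith
    · nlinarith [mul_pos h h2]
  · intro hvγ
    have hγ : 0 ≤ γ := le_trans (norm_nonneg v) hvγ
    have hsq : v 0^2 + v 1^2 + v 2^2 ≤ γ^2 := by
      rw [← norm_sq_eq3]; exact pow_le_pow_left₀ (norm_nonneg v) hvγ 2
    rw [qubitEffect_eq]
    refine Matrix.PosSemidef.of_dotProduct_mulVec_nonneg ?_ ?_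
    · ext i j
      fin_cases i <;> fin_cases j <;>
        simp [Matrix.conjTranspose_apply, Complex.ext_iff]
    · intro x
      have key : star x ⬝ᵥ (((1/2 : ℂ) •
        !![(γ : ℂ) + v 2, (v 0 : ℂ) - v 1 * Complex.I;
           (v 0 : ℂ) + v 1 * Complex.I, (γ : ℂ) - v 2]) *ᵥ x)
          = ((1/2 * (γ*((x 0).re*(x 0).re + (x 0).im*(x 0).im + (x 1).re*(x 1).re + (x 1).im*(x 1).im)
              + v 2*((x 0).re*(x 0).re + (x 0).im*(x 0).im - (x 1).re*(x 1).re - (x 1).im*(x 1).im)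
              + v 0*(2*((x 0).re*(x 1).re + (x 0).im*(x 1).im))
              + v 1*(2*((x 0).re*(x 1).im - (x 0).im*(x 1).re))) : ℝ) : ℂ) := by
        simp [dotProduct, Matrix.mulVec, Fin.sum_univ_two, Complex.ext_iff,
          Complex.mul_re, Complex.mul_im]
        constructor <;> ring
      rw [key, Complex.zero_le_real]
      have H := key_ineq γ (v 0) (v 1) (v 2) (x 0).re (x 0).im (x 1).re (x 1).im hsq hγ
      nlinarith [H]

lemma herm_decomp (G : Matrix (Fin 2) (Fin 2) ℂ) (h : G.IsHermitian) :
    ∃ γ : ℝ, ∃ g : EuclideanSpace ℝ (Fin 3), G = qubitEffect γ g := by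
  refine ⟨(G 0 0).re + (G 1 1).re,
    (WithLp.equiv 2 (Fin 3 → ℝ)).symm ![2*(G 0 1).re, -2*(G 0 1).im, (G 0 0).re - (G 1 1).re], ?_⟩
  have h00 : star (G 0 0) = G 0 0 := by rw [← Matrix.conjTranspose_apply, h]
  have h11 : star (G 1 1) = G 1 1 := by rw [← Matrix.conjTranspose_apply, h]
  have h10 : star (G 0 1) = G 1 0 := by rw [← Matrix.conjTranspose_apply, h]
  have i00 : (G 0 0).im = 0 := by
    have := congrArg Complex.im h00; simp at this; linarith
  have i11 : (G 1 1).im = 0 := by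
    have := congrArg Complex.im h11; simp at this; linarith
  have r10 : (G 1 0).re = (G 0 1).re := by
    have := congrArg Complex.re h10; simpa using this.symm
  have i10 : (G 1 0).im = -(G 0 1).im := by
    have := congrArg Complex.im h10; simp at this; linarith
  rw [qubitEffect_eq]
  ext i j
  fin_cases i <;> fin_cases j <;>
    simp [WithLp.equiv_symm_apply, Complex.ext_iff, i00, i11, r10, i10] <;>
    first | ring | (constructor <;> ring)

theorem busch_criterion (a b : EuclideanSpace ℝ (Fin 3)) (ha : ‖a‖ ≤ 1) (hb : ‖b‖ ≤ 1) :
    Coexistent (qubitEffect 1 a) (qubitEffect 1 b) ↔ ‖a + b‖ + ‖a - b‖ ≤ 2 := by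
  constructor
  · rintro ⟨G₁, G₂, G₃, G₄, p1, p2, p3, p4, hsum, hA, hB⟩
    obtain ⟨γ, g, rfl⟩ := herm_decomp G₁ p1.isHermitian
    have hγg : ‖g‖ ≤ γ := (posSemidef_qubitEffect_iff _ _).1 p1
    have hG2 : G₂ = qubitEffect (1 - γ) (a - g) := by
      have h2 : G₂ = qubitEffect 1 a - qubitEffect γ g := by rw [hA]; abel
      rw [h2, qubitEffect_sub]
    have hG3 : G₃ = qubitEffect (1 - γ) (b - g) := by
      have h3 : G₃ = qubitEffect 1 b - qubitEffect γ g := by rw [hB]; abel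
      rw [h3, qubitEffect_sub]
    have h2 : ‖a - g‖ ≤ 1 - γ := (posSemidef_qubitEffect_iff _ _).1 (hG2 ▸ p2)
    have h3 : ‖b - g‖ ≤ 1 - γ := (posSemidef_qubitEffect_iff _ _).1 (hG3 ▸ p3)
    have h4 : ‖a + b - g‖ ≤ γ := by
      have hG4 : G₄ = qubitEffect (2 - (γ + (1 - γ) + (1 - γ)))
          (0 - (g + (a - g) + (b - g))) := by
        have h4' : G₄ = 1 - (qubitEffect γ g + G₂ + G₃) := by rw [← hsum]; abel
        rw [h4', hG2, hG3, ← qubitEffect_two_zero, qubitEffect_add, qubitEffect_add,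
          qubitEffect_sub]
      have hle := (posSemidef_qubitEffect_iff _ _).1 (hG4 ▸ p4)
      have hveq : (0 : EuclideanSpace ℝ (Fin 3)) - (g + (a - g) + (b - g)) = -(a + b - g) := by
        abel
      rw [hveq, norm_neg] at hle
      linarith
    have t1 : ‖a + b‖ ≤ ‖g‖ + ‖a + b - g‖ := by
      calc ‖a + b‖ = ‖g + (a + b - g)‖ := by congr 1; abel
        _ ≤ ‖g‖ + ‖a + b - g‖ := norm_add_le _ _
    have t2 : ‖a - b‖ ≤ ‖a - g‖ + ‖b - g‖ := by
      calc ‖a - b‖ = ‖(a - g) - (b - g)‖ := by congr 1; abel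
        _ ≤ ‖a - g‖ + ‖b - g‖ := norm_sub_le _ _
    linarith
  · intro h
    set γ : ℝ := ‖a + b‖ / 2 with hγ
    set g : EuclideanSpace ℝ (Fin 3) := (1/2 : ℝ) • (a + b) with hg
    have hng : ‖g‖ = γ := by
      rw [hg, norm_smul]; simp [hγ]; ring
    have hag : ‖a - g‖ = ‖a - b‖ / 2 := by
      have : a - g = (1/2 : ℝ) • (a - b) := by rw [hg]; module
      rw [this, norm_smul]; simp; ring
    have hbg : ‖b - g‖ = ‖a - b‖ / 2 := by
      have : b - g = (-(1/2) : ℝ) • (a - b) := by rw [hg]; module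
      rw [this, norm_smul]; simp; ring
    have habg : ‖g - a - b‖ = γ := by
      have : g - a - b = (-1 : ℝ) • g := by rw [hg]; module
      rw [this, norm_smul]; simp [hng]
    refine ⟨qubitEffect γ g, qubitEffect (1 - γ) (a - g), qubitEffect (1 - γ) (b - g),
      qubitEffect γ (g - a - b), ?_, ?_, ?_, ?_, ?_, ?_, ?_⟩
    · exact (posSemidef_qubitEffect_iff _ _).2 (le_of_eq hng)
    · exact (posSemidef_qubitEffect_iff _ _).2 (by rw [hag]; linarith [norm_nonneg (a+b)])
    · exact (posSemidef_qubitEffect_iff _ _).2 (by rw [hbg]; linarith [norm_nonneg (a+b)])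
    · exact (posSemidef_qubitEffect_iff _ _).2 (le_of_eq habg)
    · rw [qubitEffect_add, qubitEffect_add, qubitEffect_add,
        show γ + (1 - γ) + (1 - γ) + γ = 2 by ring,
        show g + (a - g) + (b - g) + (g - a - b) = (0 : EuclideanSpace ℝ (Fin 3)) by module,
        qubitEffect_two_zero]
    · rw [qubitEffect_add, show γ + (1 - γ) = 1 by ring,
        show g + (a - g) = a by module]
    · rw [qubitEffect_add, show γ + (1 - γ) = 1 by ring,
        show g + (b - g) = b by module]
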